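/- Let P be a finite poset. Then the function depth : \hat{P} \to \mathbb{N} belongs to T(P), and the minimum of v(-\infty) over all v \in T(P) equals rank P + 2. (This is the combinatorial core of the formula reg R[L] = |P| - rank P - 1 for the Castelnuovo-Mumford regularity of the Hibi ring of L = I(P), since reg R[L] = dim R[L] - min{v(-\infty) : v \in T(P)} and dim R[L] = |P| + 1.) -/

import Mathlib

open Classical

/-- `Hat P` is the poset `P` with a new least element `-∞ = ⊥` and a new
greatest element `∞ = ⊤` adjoined. -/
abbrev Hat (P : Type*) := WithBot (WithTop P)

/-- The canonical inclusion of `P` into `Hat P`. -/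
def toHat {P : Type*} (x : P) : Hat P := ((x : WithTop P) : WithBot (WithTop P))

/-- The rank of a poset: the maximal length (number of covering steps) of a
chain, encoded as the maximal `n` admitting a strictly increasing sequence of
`n + 1` elements. -/
noncomputable def rankN (Q : Type*) [Preorder Q] : ℕ :=
  sSup {n : ℕ | ∃ f : Fin (n + 1) → Q, StrictMono f}

/-- The height of `x` in a poset `Q`: the rank of the subposet `{y | y ≤ x}`. -/
noncomputable def heightN {Q : Type*} [Preorder Q] (x : Q) : ℕ :=
  sSup {n : ℕ | ∃ f : Fin (n + 1) → Q, StrictMono f ∧ ∀ i, f i ≤ x}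

/-- The depth of `x` in a poset `Q`: the rank of the subposet `{y | x ≤ y}`. -/
noncomputable def depthN {Q : Type*} [Preorder Q] (x : Q) : ℕ :=
  sSup {n : ℕ | ∃ f : Fin (n + 1) → Q, StrictMono f ∧ ∀ i, x ≤ f i}

/-- `v` belongs to `S(P)`: `v : Hat P → ℕ` is order-reversing with `v ∞ = 0`. -/
def memS (P : Type*) [PartialOrder P] (v : Hat P → ℕ) : Prop :=
  v ⊤ = 0 ∧ ∀ p q : Hat P, p ≤ q → v q ≤ v p

/-- `v` belongs to `T(P)`: `v : Hat P → ℕ` is strictly order-reversing with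
`v ∞ = 0`. -/
def memT (P : Type*) [PartialOrder P] (v : Hat P → ℕ) : Prop :=
  v ⊤ = 0 ∧ ∀ p q : Hat P, p < q → v q < v p

/-- The partial order of `T(P)`: `v ≥ w` iff `v` dominates `w` pointwise and the
pointwise difference `v - w` is order-reversing. -/
def Tge (P : Type*) [PartialOrder P] (v w : Hat P → ℕ) : Prop :=
  (∀ p : Hat P, w p ≤ v p) ∧ ∀ p q : Hat P, p ≤ q → v q - w q ≤ v p - w p

/-- `v` is a minimal element of the poset `T(P)`. -/
def IsMinT (P : Type*) [PartialOrder P] (v : Hat P → ℕ) : Prop :=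
  memT P v ∧ ∀ w : Hat P → ℕ, memT P w → Tge P v w → w = v

/-- A poset is pure if all its maximal chains have the same length, equivalently
the same cardinality. -/
def IsPure (P : Type*) [PartialOrder P] : Prop :=
  ∀ C D : Set P, IsMaxChain (· ≤ ·) C → IsMaxChain (· ≤ ·) D → C.ncard = D.ncard

/- ----------------- auxiliary material ----------------- -/

noncomputable instance {α : Type*} [Fintype α] : Fintype (WithBot (WithTop α)) :=
  inferInstanceAs (Fintype (Option (Option α)))

section Aux

set_option linter.unusedSectionVars false

variable {P : Type*} [Fintype P] [PartialOrder P] [Nonempty P]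

lemma toHat_lt_toHat {a b : P} : toHat a < toHat b ↔ a < b := by
  simp [toHat]

lemma bot_lt_toHat (a : P) : (⊥ : Hat P) < toHat a := by
  simp [toHat]

lemma toHat_lt_top (a : P) : toHat a < (⊤ : Hat P) := by
  simp only [toHat, ← WithBot.coe_top, WithBot.coe_lt_coe]
  exact WithTop.coe_lt_top a

lemma depth_bdd (x : Hat P) :
    BddAbove {n : ℕ | ∃ f : Fin (n + 1) → Hat P, StrictMono f ∧ ∀ i, x ≤ f i} := by
  refine ⟨Fintype.card (Hat P), fun n hn => ?_⟩
  obtain ⟨f, hf, -⟩ := hn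
  have := Fintype.card_le_of_injective f hf.injective
  simp only [Fintype.card_fin] at this
  omega

lemma depth_nonempty (x : Hat P) :
    {n : ℕ | ∃ f : Fin (n + 1) → Hat P, StrictMono f ∧ ∀ i, x ≤ f i}.Nonempty :=
  ⟨0, fun _ => x, fun i j h => absurd (Fin.lt_def.mp h) (by omega), fun _ => le_rfl⟩

lemma rank_bdd : BddAbove {n : ℕ | ∃ f : Fin (n + 1) → P, StrictMono f} := by
  refine ⟨Fintype.card P, fun n hn => ?_⟩
  obtain ⟨f, hf⟩ := hn
  have := Fintype.card_le_of_injective f hf.injective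
  simp only [Fintype.card_fin] at this
  omega

lemma rank_nonempty : {n : ℕ | ∃ f : Fin (n + 1) → P, StrictMono f}.Nonempty :=
  ⟨0, fun _ => Classical.arbitrary P, fun i j h => absurd (Fin.lt_def.mp h) (by omega)⟩

lemma depth_top_eq : depthN (⊤ : Hat P) = 0 := by
  unfold depthN
  refine le_antisymm (csSup_le (depth_nonempty _) ?_) (Nat.zero_le _)
  rintro n ⟨f, hf, hle⟩
  by_contra h
  have h1 : f 0 < f ⟨1, by omega⟩ := hf (by simp [Fin.lt_def])
  have e0 : f 0 = ⊤ := top_le_iff.mp (hle 0)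
  have e1 : f ⟨1, by omega⟩ = ⊤ := top_le_iff.mp (hle _)
  rw [e0, e1] at h1
  exact lt_irrefl _ h1

lemma depth_strict_anti {p q : Hat P} (hpq : p < q) : depthN q < depthN p := by
  have hmem := Nat.sSup_mem (depth_nonempty q) (depth_bdd q)
  obtain ⟨f, hf, hle⟩ := hmem
  set n := depthN q with hn
  refine lt_of_lt_of_le (Nat.lt_succ_self n) ?_
  refine le_csSup (depth_bdd p) ⟨Fin.cons p (fun i => f i), ?_, ?_⟩
  · rw [Fin.strictMono_iff_lt_succ]
    intro i
    induction i using Fin.cases with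
    | zero => exact lt_of_lt_of_le hpq (hle 0)
    | succ i =>
      simp only [Fin.cons_succ]
      rw [show (Fin.castSucc i.succ) = Fin.succ i.castSucc by rfl, Fin.cons_succ]
      exact hf Fin.castSucc_lt_succ
  · intro i
    induction i using Fin.cases with
    | zero => simp
    | succ i => exact le_of_lt (lt_of_lt_of_le hpq (hle i))

/-- The canonical chain of length `r + 2` in `Hat P` obtained from a chain
of length `r` in `P` by adjoining `⊥` and `⊤`. -/
noncomputable def hatChain {r : ℕ} (f : Fin (r + 1) → P) : Fin (r + 3) → Hat P :=
  fun i =>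
    if h0 : (i : ℕ) = 0 then ⊥
    else if h2 : (i : ℕ) = r + 2 then ⊤
    else toHat (f ⟨(i : ℕ) - 1, by have := i.isLt; omega⟩)

lemma hatChain_strictMono {r : ℕ} {f : Fin (r + 1) → P} (hf : StrictMono f) :
    StrictMono (hatChain f) := by
  intro i j hij
  have hij' : (i : ℕ) < (j : ℕ) := Fin.lt_def.mp hij
  have hi := i.isLt
  have hj := j.isLt
  unfold hatChain
  split_ifs with h1 h2 h3 h4 h5
  · omega
  · exact lt_trans (bot_lt_toHat (Classical.arbitrary P)) (toHat_lt_top (Classical.arbitrary P))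
  · exact bot_lt_toHat _
  · omega
  · omega
  · omega
  · omega
  · exact toHat_lt_top _
  · rw [toHat_lt_toHat]
    apply hf
    rw [Fin.mk_lt_mk]
    omega

lemma hatChain_zero {r : ℕ} (f : Fin (r + 1) → P) : hatChain f 0 = ⊥ := by
  simp [hatChain]

lemma hatChain_last {r : ℕ} (f : Fin (r + 1) → P) :
    hatChain f ⟨r + 2, by omega⟩ = ⊤ := by
  simp [hatChain]

/-- Lower bound: every `v ∈ T(P)` has `v ⊥ ≥ rank P + 2`. -/
lemma rank_add_two_le_v_bot {v : Hat P → ℕ} (hv : memT P v) :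
    rankN P + 2 ≤ v ⊥ := by
  obtain ⟨r, hr⟩ : ∃ r, r = rankN P := ⟨_, rfl⟩
  rw [← hr]
  obtain ⟨f, hf⟩ : ∃ f : Fin (r + 1) → P, StrictMono f := by
    subst hr
    exact Nat.sSup_mem (rank_nonempty (P := P)) rank_bdd
  have key : ∀ k, k ≤ r + 2 → k ≤ v (hatChain f ⟨r + 2 - k, by omega⟩) := by
    intro k
    induction k with
    | zero => intro _; exact Nat.zero_le _
    | succ k ih =>
      intro hk
      have hlt : (⟨r + 2 - (k + 1), by omega⟩ : Fin (r + 3)) < ⟨r + 2 - k, by omega⟩ := by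
        rw [Fin.mk_lt_mk]; omega
      have h1 : hatChain f ⟨r + 2 - (k + 1), by omega⟩ < hatChain f ⟨r + 2 - k, by omega⟩ :=
        hatChain_strictMono hf hlt
      have h2 := hv.2 _ _ h1
      have h3 := ih (by omega)
      omega
  have := key (r + 2) le_rfl
  simpa [hatChain_zero] using this

lemma depth_bot_eq : depthN (⊥ : Hat P) = rankN P + 2 := by
  refine le_antisymm ?_ ?_
  · -- depthN ⊥ ≤ r + 2 : extract a chain in P from a chain in Hat P
    refine csSup_le (depth_nonempty _) ?_
    rintro n ⟨f, hf, -⟩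
    rcases n with _ | _ | m
    · omega
    · omega
    -- n = m + 2, f : Fin (m + 3) → Hat P
    have hmid : ∀ i : Fin (m + 1), ∃ p : P, f ⟨(i : ℕ) + 1, by have := i.isLt; omega⟩ = toHat p := by
      intro i
      have hi := i.isLt
      have hb : f ⟨0, by omega⟩ < f ⟨(i : ℕ) + 1, by omega⟩ :=
        hf (by rw [Fin.mk_lt_mk]; omega)
      have ht : f ⟨(i : ℕ) + 1, by omega⟩ < f ⟨m + 2, by omega⟩ :=
        hf (by rw [Fin.mk_lt_mk]; omega)
      set x := f ⟨(i : ℕ) + 1, by have := i.isLt; omega⟩ with hx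
      have hnb : x ≠ ⊥ := fun h => not_lt_bot (h ▸ hb)
      obtain ⟨a, ha⟩ := WithBot.ne_bot_iff_exists.mp hnb
      have hant : a ≠ ⊤ := by
        rintro rfl
        rw [← ha] at ht
        rw [WithBot.coe_top] at ht
        exact not_top_lt ht
      obtain ⟨p, hp⟩ := WithTop.ne_top_iff_exists.mp hant
      exact ⟨p, by rw [← ha, ← hp]; rfl⟩
    choose g hg using hmid
    have hgmono : StrictMono g := by
      intro i j hij
      have hi := i.isLt
      have hj := j.isLt
      have hij' : (i : ℕ) < (j : ℕ) := Fin.lt_def.mp hij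
      have : f ⟨(i : ℕ) + 1, by omega⟩ < f ⟨(j : ℕ) + 1, by omega⟩ :=
        hf (by rw [Fin.mk_lt_mk]; omega)
      rw [hg i, hg j, toHat_lt_toHat] at this
      exact this
    have : m ≤ rankN P := le_csSup rank_bdd ⟨g, hgmono⟩
    omega
  · -- r + 2 ≤ depthN ⊥
    obtain ⟨r, hr⟩ : ∃ r, r = rankN P := ⟨_, rfl⟩
    rw [← hr]
    obtain ⟨f, hf⟩ : ∃ f : Fin (r + 1) → P, StrictMono f := by
      subst hr
      exact Nat.sSup_mem (rank_nonempty (P := P)) rank_bdd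
    exact le_csSup (depth_bdd _) ⟨hatChain f, hatChain_strictMono hf, fun _ => bot_le⟩

end Aux

/-- The depth function belongs to `T(P)`, and the minimum of `v(-∞)` over all
`v ∈ T(P)` equals `rank P + 2` (the combinatorial core of the regularity
formula `reg R[L] = |P| - rank P - 1` for Hibi rings). -/
theorem isLeast_min_value_at_bot (P : Type*) [Fintype P] [PartialOrder P]
    [Nonempty P] :
    memT P (fun x => depthN x) ∧
      IsLeast {n : ℕ | ∃ v : Hat P → ℕ, memT P v ∧ v ⊥ = n} (rankN P + 2) := by
  have hd : memT P (fun x => depthN x) :=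
    ⟨depth_top_eq, fun p q h => depth_strict_anti h⟩
  refine ⟨hd, ⟨⟨fun x => depthN x, hd, depth_bot_eq⟩, ?_⟩⟩
  rintro n ⟨v, hv, rfl⟩
  exact rank_add_two_le_v_bot hv
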